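/- Let A, B be nonempty subsets of a normed space X and T a p-cyclic φ-contraction mapping. If (x,y) ∈ A × B satisfies ‖(x,y) − (T(x,y), T(y,x))‖ = dist(A,B), then ‖T(T(x,y), T(y,x)) − T(x,y)‖ = dist(A,B). -/
import Mathlib


open Filter Topology

/-- `setDist A B = inf {‖a - b‖ : a ∈ A, b ∈ B}`. -/
noncomputable def setDist {X : Type*} [NormedAddCommGroup X] (A B : Set X) : ℝ :=
  sInf {d : ℝ | ∃ a ∈ A, ∃ b ∈ B, d = ‖a - b‖}

theorem stmt17 {X : Type*} [NormedAddCommGroup X] [NormedSpace ℝ X]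
    (A B : Set X) (hA : A.Nonempty) (hB : B.Nonempty)
    (T : X → X → X) (φ : ℝ → ℝ)
    (hφmono : StrictMonoOn φ (Set.Ici 0)) (hφpos : ∀ t ≥ (0:ℝ), 0 ≤ φ t)
    (hTB : ∀ x ∈ A, ∀ y ∈ B, T x y ∈ B)
    (hTA : ∀ x ∈ B, ∀ y ∈ A, T x y ∈ A)
    (hT : ∀ x₁ ∈ A, ∀ y₁ ∈ B, ∀ x₂ ∈ B, ∀ y₂ ∈ A,
      ‖T x₁ y₁ - T x₂ y₂‖ ≤ ‖((x₁, y₁) : X × X) - (x₂, y₂)‖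
        - φ ‖((x₁, y₁) : X × X) - (x₂, y₂)‖ + φ (setDist A B))
    (x' y' : X) (hx' : x' ∈ A) (hy' : y' ∈ B)
    (h : ‖((x', y') : X × X) - (T x' y', T y' x')‖ = setDist A B) :
    ‖T (T x' y') (T y' x') - T x' y'‖ = setDist A B := by
  set u := T x' y' with hu
  set v := T y' x' with hv
  have hub : u ∈ B := hTB x' hx' y' hy'
  have hva : v ∈ A := hTA y' hy' x' hx'
  have hle : ‖T x' y' - T u v‖ ≤ setDist A B := by
    have := hT x' hx' y' hy' u hub v hva
    rw [h] at this
    linarith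
  have hge : setDist A B ≤ ‖T u v - u‖ := by
    apply csInf_le
    · exact ⟨0, fun r ⟨a, _, b, _, hr⟩ => hr ▸ norm_nonneg _⟩
    · exact ⟨T u v, hTA u hub v hva, u, hub, rfl⟩
  have : ‖T u v - u‖ = ‖T x' y' - T u v‖ := by
    rw [← hu, norm_sub_rev]
  linarith [this ▸ hge, this ▸ hle]
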